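/- Let l ≥ 0 be an integer and φ : [1,∞) → (0,∞) slowly varying (measurable, locally bounded and bounded away from zero). If ∫₁^∞ dt/(t φ(t)²) < ∞, then every element of H^{l+n/2, φ}(ℝⁿ) coincides almost everywhere with a function of class C^l(ℝⁿ), and the embedding H^{l+n/2,φ}(ℝⁿ) ⊂ C^l_b(ℝⁿ) (functions with bounded continuous derivatives up to order l) is continuous. -/

import Mathlib

open Filter Topology MeasureTheory FourierTransform

/-- Slowly varying at infinity in the sense of Karamata. -/
def SlowlyVarying (φ : ℝ → ℝ) : Prop :=
  ∀ l : ℝ, 0 < l → Tendsto (fun t => φ (l * t) / φ t) atTop (𝓝 1)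

/-- Borel measurable, positive, bounded and bounded away from zero on compact
subintervals of `[1,∞)`, and slowly varying at infinity. -/
def GoodWeight (φ : ℝ → ℝ) : Prop :=
  Measurable φ ∧ (∀ t, 1 ≤ t → 0 < φ t) ∧
  (∀ b : ℝ, 1 ≤ b → ∃ c C : ℝ, 0 < c ∧ ∀ t ∈ Set.Icc 1 b, c ≤ φ t ∧ φ t ≤ C) ∧
  SlowlyVarying φ

/-- The smoothed modulus `⟨ξ⟩ = (1 + |ξ|²)^{1/2}`. -/
noncomputable def smod {n : ℕ} (ξ : EuclideanSpace ℝ (Fin n)) : ℝ :=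
  Real.sqrt (1 + ‖ξ‖ ^ 2)

/-- The Hörmander weight `⟨ξ⟩^{2s} φ(⟨ξ⟩)²`. -/
noncomputable def hWeight {n : ℕ} (s : ℝ) (φ : ℝ → ℝ)
    (ξ : EuclideanSpace ℝ (Fin n)) : ℝ :=
  smod ξ ^ (2 * s) * (φ (smod ξ)) ^ 2

/-- The squared Hörmander norm of an element of `H^{s,φ}(ℝⁿ)`, described via its
Fourier transform `g = ŵ`:  `∫ ⟨ξ⟩^{2s} φ(⟨ξ⟩)² |ŵ(ξ)|² dξ`. -/
noncomputable def hNormSq {n : ℕ} (s : ℝ) (φ : ℝ → ℝ)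
    (g : EuclideanSpace ℝ (Fin n) → ℂ) : ℝ :=
  ∫ ξ, hWeight s φ ξ * ‖g ξ‖ ^ 2

/-- Membership of a tempered distribution `w` in `H^{s,φ}(ℝⁿ)`, described via its
Fourier transform `g = ŵ` (a locally integrable function): the weighted square
integral is finite. -/
def MemH {n : ℕ} (s : ℝ) (φ : ℝ → ℝ) (g : EuclideanSpace ℝ (Fin n) → ℂ) : Prop :=
  AEStronglyMeasurable g volume ∧
    Integrable (fun ξ => hWeight s φ ξ * ‖g ξ‖ ^ 2) volume

/-! ### Auxiliary lemmas -/

section Aux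

open Set

/-- Polar coordinates for lower Lebesgue integrals of radial functions on `ℝⁿ`. -/
private lemma lintegral_norm_polar {n : ℕ} (hn : n ≠ 0) (f : ℝ → ENNReal) (hf : Measurable f) :
    ∫⁻ x : EuclideanSpace ℝ (Fin n), f ‖x‖ =
      (volume : Measure (EuclideanSpace ℝ (Fin n))).toSphere Set.univ *
        ∫⁻ r in Set.Ioi (0:ℝ), ENNReal.ofReal (r ^ (n-1)) * f r := by
  set E := EuclideanSpace ℝ (Fin n)
  haveI : Nontrivial E :=
    Module.nontrivial_of_finrank_pos (R := ℝ) (by rw [finrank_euclideanSpace_fin]; omega)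
  have h0 : ∫⁻ x : E, f ‖x‖ = ∫⁻ x in ({0}ᶜ : Set E), f ‖x‖ := by
    rw [MeasureTheory.restrict_compl_singleton]
  rw [h0, ← lintegral_subtype_comap (measurableSet_singleton (0:E)).compl (fun x => f ‖x‖)]
  have hmp := Measure.measurePreserving_homeomorphUnitSphereProd (volume : Measure E)
  have hg : Measurable (fun p : Metric.sphere (0:E) 1 × Set.Ioi (0:ℝ) => f p.2) :=
    (hf.comp measurable_subtype_coe).comp measurable_snd
  have h2 : ∫⁻ x : ({0}ᶜ : Set E), f ‖(x : E)‖ ∂(Measure.comap Subtype.val volume)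
      = ∫⁻ p : Metric.sphere (0:E) 1 × Set.Ioi (0:ℝ), f p.2
          ∂((volume : Measure E).toSphere.prod (Measure.volumeIoiPow (Module.finrank ℝ E - 1))) := by
    rw [← hmp.lintegral_comp hg]
    simp
  have hdim : Module.finrank ℝ E - 1 = n - 1 := by rw [finrank_euclideanSpace_fin]
  rw [h2, hdim, lintegral_prod _ hg.aemeasurable]
  have h3 : ∫⁻ r : Set.Ioi (0:ℝ), f r ∂(Measure.volumeIoiPow (n-1))
      = ∫⁻ r in Set.Ioi (0:ℝ), ENNReal.ofReal (r ^ (n-1)) * f r := by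
    rw [Measure.volumeIoiPow,
      lintegral_withDensity_eq_lintegral_mul _
        ((measurable_subtype_coe.pow_const _).ennreal_ofReal)
        (show Measurable (fun r : Set.Ioi (0:ℝ) => f (r:ℝ)) from hf.comp measurable_subtype_coe),
      ← lintegral_subtype_comap measurableSet_Ioi
        (fun r : ℝ => ENNReal.ofReal (r ^ (n-1)) * f r)]
    rfl
  simp only [h3]
  rw [lintegral_const, mul_comm]

/-- A nonnegative radial function whose profile is integrable against `r^(n-1)` on `(0,∞)`
is integrable on `ℝⁿ`. -/
private lemma integrable_of_radial {n : ℕ} {f : ℝ → ℝ} (hf : Measurable f)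
    (hnn : ∀ r, 0 ≤ f r)
    (hint : IntegrableOn (fun r => r ^ (n-1) * f r) (Set.Ioi (0:ℝ)) volume) :
    Integrable (fun x : EuclideanSpace ℝ (Fin n) => f ‖x‖) volume := by
  have hmeas : Measurable (fun x : EuclideanSpace ℝ (Fin n) => f ‖x‖) :=
    hf.comp measurable_norm
  rcases Nat.eq_zero_or_pos n with rfl | hn
  · haveI : Subsingleton (EuclideanSpace ℝ (Fin 0)) :=
      ⟨fun a b => PiLp.ext fun i => i.elim0⟩
    have : (fun x : EuclideanSpace ℝ (Fin 0) => f ‖x‖)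
        = fun _ => f ‖(0 : EuclideanSpace ℝ (Fin 0))‖ := by
      funext x; rw [Subsingleton.elim x 0]
    rw [this]
    exact integrable_const _
  refine ⟨hmeas.aestronglyMeasurable, ?_⟩
  rw [hasFiniteIntegral_iff_norm]
  have heq : ∀ x : EuclideanSpace ℝ (Fin n),
      ENNReal.ofReal ‖f ‖x‖‖ = (fun r => ENNReal.ofReal (f r)) ‖x‖ := by
    intro x; rw [Real.norm_of_nonneg (hnn _)]
  simp only [heq]
  rw [lintegral_norm_polar (by omega) _ (hf.ennreal_ofReal)]
  apply ENNReal.mul_lt_top (measure_lt_top _ _)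
  have hb : ∫⁻ r in Set.Ioi (0:ℝ), ENNReal.ofReal (r ^ (n-1)) * ENNReal.ofReal (f r)
      = ∫⁻ r in Set.Ioi (0:ℝ), ENNReal.ofReal (r ^ (n-1) * f r) := by
    refine setLIntegral_congr_fun measurableSet_Ioi (fun r hr => ?_)
    rw [ENNReal.ofReal_mul (pow_nonneg (le_of_lt hr) _)]
  rw [hb]
  calc ∫⁻ r in Set.Ioi (0:ℝ), ENNReal.ofReal (r ^ (n-1) * f r)
      ≤ ∫⁻ r in Set.Ioi (0:ℝ), ENNReal.ofReal ‖r ^ (n-1) * f r‖ := by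
        refine lintegral_mono fun r => ENNReal.ofReal_le_ofReal (le_abs_self _)
    _ < ⊤ := by
        have := hint.2
        rwa [hasFiniteIntegral_iff_norm] at this

/-- The radial profile `r^(n-1) ⟨r⟩^{-n} φ(⟨r⟩)^{-2}` is integrable on `(0,∞)` when
`∫₁^∞ dt/(t φ(t)²) < ∞`. -/
private lemma radial_profile_integrable {n : ℕ} (hn : n ≠ 0) {φ : ℝ → ℝ} (hφ : GoodWeight φ)
    (hint : IntegrableOn (fun t : ℝ => (t * (φ t) ^ 2)⁻¹) (Set.Ici 1) volume) :
    IntegrableOn (fun r : ℝ =>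
      r ^ (n-1) * ((Real.sqrt (1 + r^2) ^ n * φ (Real.sqrt (1 + r^2)) ^ 2)⁻¹))
      (Set.Ioi (0:ℝ)) volume := by
  set ρ : ℝ → ℝ := fun r => Real.sqrt (1 + r^2) with hρ
  have hρc : Continuous ρ := Real.continuous_sqrt.comp (by continuity)
  have hρm : Measurable ρ := hρc.measurable
  have hρ1 : ∀ r : ℝ, 1 ≤ ρ r := fun r => by
    rw [show (1:ℝ) = Real.sqrt 1 from Real.sqrt_one.symm]
    exact Real.sqrt_le_sqrt (by nlinarith)
  have hρ0 : ∀ r : ℝ, 0 < ρ r := fun r => lt_of_lt_of_le one_pos (hρ1 r)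
  have h12 : (1:ℝ) ≤ Real.sqrt 2 := by
    rw [show (1:ℝ) = Real.sqrt 1 from Real.sqrt_one.symm]
    exact Real.sqrt_le_sqrt one_le_two
  have hfm : Measurable (fun r : ℝ => (ρ r ^ n * φ (ρ r) ^ 2)⁻¹) :=
    ((hρm.pow_const n).mul ((hφ.1.comp hρm).pow_const 2)).inv
  have hgm : Measurable (fun r : ℝ => r ^ (n-1) * (ρ r ^ n * φ (ρ r) ^ 2)⁻¹) :=
    (measurable_id.pow_const _).mul hfm
  have hsplit : Set.Ioc (0:ℝ) 1 ∪ Set.Ioi (1:ℝ) = Set.Ioi (0:ℝ) :=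
    Set.Ioc_union_Ioi_eq_Ioi zero_le_one
  rw [← hsplit]
  apply IntegrableOn.union
  · -- on (0,1]
    obtain ⟨c, C, hc, hcC⟩ := hφ.2.2.1 (Real.sqrt 2) h12
    refine Integrable.mono' (g := fun _ => (c^2)⁻¹)
      (integrableOn_const (hs := measure_Ioc_lt_top.ne))
      hgm.aestronglyMeasurable.restrict ?_
    filter_upwards [ae_restrict_mem measurableSet_Ioc] with r hr
    have hr0 : 0 < r := hr.1
    have hρub : ρ r ≤ Real.sqrt 2 := Real.sqrt_le_sqrt (by nlinarith [hr.2])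
    have hcφ : c ≤ φ (ρ r) := (hcC (ρ r) ⟨hρ1 r, hρub⟩).1
    have hA : c^2 ≤ ρ r ^ n * φ (ρ r) ^ 2 := by
      have h1 : c^2 ≤ φ (ρ r)^2 := pow_le_pow_left₀ hc.le hcφ 2
      have h2 : (1:ℝ) ≤ ρ r ^ n := one_le_pow₀ (hρ1 r)
      nlinarith
    have hf_le : (ρ r ^ n * φ (ρ r) ^ 2)⁻¹ ≤ (c^2)⁻¹ :=
      inv_anti₀ (by positivity) hA
    have hrpow : r ^ (n-1) ≤ 1 := pow_le_one₀ hr0.le hr.2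
    rw [Real.norm_of_nonneg (by positivity)]
    calc r ^ (n-1) * (ρ r ^ n * φ (ρ r) ^ 2)⁻¹ ≤ 1 * (c^2)⁻¹ :=
          mul_le_mul hrpow hf_le (by positivity) one_pos.le
      _ = (c^2)⁻¹ := one_mul _
  · -- on (1,∞)
    have hderiv : ∀ r ∈ Set.Ioi (1:ℝ), HasDerivWithinAt ρ (r / ρ r) (Set.Ioi 1) r := by
      intro r _
      have h1 : HasDerivAt (fun t : ℝ => 1 + t^2) (2*r) r := by
        simpa using (hasDerivAt_pow 2 r).const_add 1
      have h2 := (Real.hasDerivAt_sqrt (by positivity : (1:ℝ)+r^2 ≠ 0)).comp r h1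
      have h3 : 1/(2 * Real.sqrt (1+r^2)) * (2*r) = r / ρ r := by
        rw [hρ]; field_simp
      exact (h3 ▸ h2).hasDerivWithinAt
    have hinj : Set.InjOn ρ (Set.Ioi 1) := by
      intro a ha b hb hab
      have ha' : (1:ℝ) < a := ha
      have hb' : (1:ℝ) < b := hb
      have h := (Real.sqrt_inj (by positivity) (by positivity)).1 hab
      have h2 : a^2 = b^2 := by linarith
      have hab1 : a ≤ b := by nlinarith
      have hab2 : b ≤ a := by nlinarith
      linarith
    have himg : ρ '' (Set.Ioi 1) = Set.Ioi (Real.sqrt 2) := by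
      ext t
      constructor
      · rintro ⟨r, hr, rfl⟩
        have : (1:ℝ) < r := hr
        exact Real.sqrt_lt_sqrt (by norm_num) (by nlinarith)
      · intro ht
        have ht' : Real.sqrt 2 < t := ht
        have ht0 : 0 < t := lt_of_lt_of_le (by positivity) ht'.le
        have h2t : 2 < t^2 := by
          nlinarith [Real.sq_sqrt (show (0:ℝ) ≤ 2 by norm_num), Real.sqrt_nonneg 2]
        refine ⟨Real.sqrt (t^2 - 1), ?_, ?_⟩
        · show (1:ℝ) < Real.sqrt (t^2-1)
          nth_rewrite 1 [show (1:ℝ) = Real.sqrt 1 from Real.sqrt_one.symm]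
          exact Real.sqrt_lt_sqrt (by norm_num) (by nlinarith)
        · show Real.sqrt (1 + Real.sqrt (t^2-1)^2) = t
          rw [Real.sq_sqrt (by nlinarith), show 1 + (t^2 - 1) = t^2 by ring,
            Real.sqrt_sq ht0.le]
    have hcv := (integrableOn_image_iff_integrableOn_abs_deriv_smul measurableSet_Ioi
        hderiv hinj (fun t => (t * φ t ^ 2)⁻¹)).1
      (by rw [himg]; exact hint.mono_set (fun t ht => le_trans h12 (le_of_lt ht)))
    refine Integrable.mono' (hcv.const_mul (Real.sqrt 2))
      hgm.aestronglyMeasurable.restrict ?_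
    filter_upwards [ae_restrict_mem measurableSet_Ioi] with r hr
    have hr1 : (1:ℝ) < r := hr
    have hr0 : (0:ℝ) < r := lt_trans one_pos hr1
    set s := ρ r with hs
    have hs0 : 0 < s := hρ0 r
    have hrs : r ≤ s := by
      nlinarith [Real.sq_sqrt (show (0:ℝ) ≤ 1 + r^2 by positivity), Real.sqrt_nonneg (1+r^2)]
    have hs2r : s ≤ Real.sqrt 2 * r := by
      have h1 : s ≤ Real.sqrt (2 * r^2) := Real.sqrt_le_sqrt (by nlinarith)
      rwa [Real.sqrt_mul (by norm_num) (r^2), Real.sqrt_sq hr0.le] at h1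
    have hφpos : 0 < φ s := hφ.2.1 s (hρ1 r)
    have hpow : r ^ (n-1) ≤ s ^ (n-1) := pow_le_pow_left₀ hr0.le hrs _
    have hkey : r ^ (n-1) * s ≤ Real.sqrt 2 * r * s ^ (n-1) := by
      calc r ^ (n-1) * s ≤ s ^ (n-1) * (Real.sqrt 2 * r) :=
            mul_le_mul hpow hs2r hs0.le (by positivity)
        _ = Real.sqrt 2 * r * s ^ (n-1) := by ring
    rw [Real.norm_of_nonneg (by positivity), smul_eq_mul,
      abs_of_pos (div_pos hr0 hs0)]
    have hsn : s ^ n = s ^ (n-1) * s := by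
      rw [← pow_succ]; congr 1; omega
    rw [hsn]
    have e1 : r^(n-1) * ((s^(n-1) * s) * φ s^2)⁻¹ = r^(n-1) / (s^(n-1) * s * φ s^2) :=
      (div_eq_mul_inv _ _).symm
    have e2 : Real.sqrt 2 * (r/s * (s * φ s^2)⁻¹) = (Real.sqrt 2 * r) / (s * (s * φ s^2)) := by
      field_simp
    rw [e1, e2, div_le_div_iff₀ (by positivity) (by positivity)]
    nlinarith [mul_le_mul_of_nonneg_right hkey (show (0:ℝ) ≤ s * φ s^2 by positivity)]

/-- The weight `⟨ξ⟩^{-n} φ(⟨ξ⟩)^{-2}` is integrable on `ℝⁿ`. -/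
private lemma weight_inv_integrable {n : ℕ} {φ : ℝ → ℝ} (hφ : GoodWeight φ)
    (hint : IntegrableOn (fun t : ℝ => (t * (φ t) ^ 2)⁻¹) (Set.Ici 1) volume) :
    Integrable (fun ξ : EuclideanSpace ℝ (Fin n) => (smod ξ ^ n * φ (smod ξ) ^ 2)⁻¹) volume := by
  rcases Nat.eq_zero_or_pos n with rfl | hn
  · haveI : Subsingleton (EuclideanSpace ℝ (Fin 0)) :=
      ⟨fun a b => PiLp.ext fun i => i.elim0⟩
    have : (fun ξ : EuclideanSpace ℝ (Fin 0) => (smod ξ ^ 0 * φ (smod ξ) ^ 2)⁻¹)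
        = fun _ => (smod (0 : EuclideanSpace ℝ (Fin 0)) ^ 0
            * φ (smod (0 : EuclideanSpace ℝ (Fin 0))) ^ 2)⁻¹ := by
      funext x; rw [Subsingleton.elim x 0]
    rw [this]
    exact integrable_const _
  have hρc : Continuous (fun r : ℝ => Real.sqrt (1 + r^2)) :=
    Real.continuous_sqrt.comp (by continuity)
  have hρm : Measurable (fun r : ℝ => Real.sqrt (1 + r^2)) := hρc.measurable
  have hfm : Measurable (fun r : ℝ =>
      (Real.sqrt (1 + r^2) ^ n * φ (Real.sqrt (1 + r^2)) ^ 2)⁻¹) :=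
    ((hρm.pow_const n).mul ((hφ.1.comp hρm).pow_const 2)).inv
  have hnn : ∀ r : ℝ, 0 ≤ (Real.sqrt (1 + r^2) ^ n * φ (Real.sqrt (1 + r^2)) ^ 2)⁻¹ := by
    intro r
    have := Real.sqrt_nonneg (1 + r^2)
    positivity
  have := integrable_of_radial hfm hnn (radial_profile_integrable (by omega) hφ hint)
  simpa [smod] using this

/-- Cauchy–Schwarz for integrals of nonnegative functions. -/
private lemma cs_int {α : Type*} [MeasurableSpace α] {μ : Measure α} {a b : α → ℝ}
    (han : ∀ x, 0 ≤ a x) (hbn : ∀ x, 0 ≤ b x)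
    (ham : AEStronglyMeasurable a μ) (hbm : AEStronglyMeasurable b μ)
    (ha2 : Integrable (fun x => a x ^ 2) μ) (hb2 : Integrable (fun x => b x ^ 2) μ) :
    Integrable (fun x => a x * b x) μ ∧
      ∫ x, a x * b x ∂μ ≤ Real.sqrt (∫ x, a x ^ 2 ∂μ) * Real.sqrt (∫ x, b x ^ 2 ∂μ) := by
  have hma : MemLp a 2 μ := (memLp_two_iff_integrable_sq ham).2 ha2
  have hmb : MemLp b 2 μ := (memLp_two_iff_integrable_sq hbm).2 hb2
  constructor
  · have h := hmb.smul (p := 2) (q := 2) (r := 1) hma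
      (hpqr := ⟨by norm_num [ENNReal.inv_two_add_inv_two]⟩)
    have h2 := memLp_one_iff_integrable.1 h
    exact h2
  · have hconj : (2:ℝ).HolderConjugate 2 := Real.HolderConjugate.two_two
    have h2 : ENNReal.ofReal (2:ℝ) = 2 := by norm_num
    have h := integral_mul_le_Lp_mul_Lq_of_nonneg hconj
      (ae_of_all _ han) (ae_of_all _ hbn) (h2 ▸ hma) (h2 ▸ hmb)
    calc ∫ x, a x * b x ∂μ
        ≤ (∫ x, a x ^ (2:ℝ) ∂μ) ^ ((1:ℝ)/2) * (∫ x, b x ^ (2:ℝ) ∂μ) ^ ((1:ℝ)/2) := h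
      _ = Real.sqrt (∫ x, a x ^ 2 ∂μ) * Real.sqrt (∫ x, b x ^ 2 ∂μ) := by
          rw [← Real.sqrt_eq_rpow, ← Real.sqrt_eq_rpow]
          norm_num [Real.rpow_two]

end Aux

/-- Hörmander embedding theorem: if `∫₁^∞ dt/(t φ(t)²) < ∞`, then every element of
`H^{l+n/2,φ}(ℝⁿ)` (described by its Fourier transform `g`, the element itself being
the inverse Fourier transform of `g`) coincides a.e. with a function of class `C^l`
whose derivatives up to order `l` are bounded, and the embedding
`H^{l+n/2,φ}(ℝⁿ) ⊂ C^l_b(ℝⁿ)` is continuous. -/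
theorem hoermander_embedding (n l : ℕ) (φ : ℝ → ℝ) (hφ : GoodWeight φ)
    (hint : IntegrableOn (fun t : ℝ => (t * (φ t) ^ 2)⁻¹) (Set.Ici 1) volume) :
    ∃ C : ℝ, 0 < C ∧ ∀ g : EuclideanSpace ℝ (Fin n) → ℂ,
      MemH ((l : ℝ) + n / 2) φ g →
      ∃ u : EuclideanSpace ℝ (Fin n) → ℂ,
        ContDiff ℝ (l : ℕ∞) u ∧
        u =ᵐ[volume] 𝓕⁻ g ∧
        ∀ i : ℕ, i ≤ l → ∀ x, ‖iteratedFDeriv ℝ i u x‖ ≤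
          C * Real.sqrt (hNormSq ((l : ℝ) + n / 2) φ g) := by
  classical
  set E := EuclideanSpace ℝ (Fin n)
  set s : ℝ := (l : ℝ) + n / 2 with hs_def
  -- basic facts about `smod`
  have hsm1 : ∀ ξ : E, 1 ≤ smod ξ := by
    intro ξ
    rw [smod]
    have h := Real.sq_sqrt (show (0:ℝ) ≤ 1 + ‖ξ‖^2 by positivity)
    nlinarith [Real.sqrt_nonneg (1 + ‖ξ‖^2)]
  have hsm0 : ∀ ξ : E, 0 < smod ξ := fun ξ => lt_of_lt_of_le one_pos (hsm1 ξ)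
  have hsm_meas : Measurable (smod : E → ℝ) := by
    apply Continuous.measurable
    exact Real.continuous_sqrt.comp (by continuity)
  have hφpos : ∀ ξ : E, 0 < φ (smod ξ) := fun ξ => hφ.2.1 _ (hsm1 ξ)
  -- the comparison weight and its integral
  set A : E → ℝ := fun ξ => (smod ξ ^ n * φ (smod ξ) ^ 2)⁻¹ with hA_def
  have hA_int : Integrable A volume := weight_inv_integrable hφ hint
  have hA_nn : ∀ ξ, 0 ≤ A ξ := by
    intro ξ
    have h1 := (hsm0 ξ).le
    rw [hA_def]
    positivity
  have hA_meas : Measurable A :=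
    ((hsm_meas.pow_const n).mul ((hφ.1.comp hsm_meas).pow_const 2)).inv
  set K : ℝ := ∫ ξ, A ξ with hK_def
  have hK0 : 0 ≤ K := integral_nonneg hA_nn
  -- the constant
  set C : ℝ := (2 * Real.pi + 1) ^ l * (Real.sqrt K + 1) with hC_def
  have hπ := Real.pi_pos
  have hC : 0 < C := by
    have := Real.sqrt_nonneg K
    positivity
  refine ⟨C, hC, fun g hg => ?_⟩
  set Q : ℝ := hNormSq s φ g with hQ_def
  -- rewrite `hWeight` with natural powers
  have hW_eq : ∀ ξ : E, hWeight s φ ξ = smod ξ ^ (2*l+n) * φ (smod ξ) ^ 2 := by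
    intro ξ
    have h1 : (2:ℝ) * s = ((2*l+n : ℕ) : ℝ) := by rw [hs_def]; push_cast; ring
    rw [hWeight, h1, Real.rpow_natCast]
  have hW_nn : ∀ ξ : E, 0 ≤ hWeight s φ ξ := by
    intro ξ
    rw [hW_eq ξ]
    exact mul_nonneg (pow_nonneg (hsm0 ξ).le _) (sq_nonneg _)
  have hW_meas : Measurable (fun ξ : E => hWeight s φ ξ) := by
    have : (fun ξ : E => hWeight s φ ξ)
        = fun ξ => smod ξ ^ (2*l+n) * φ (smod ξ) ^ 2 := funext hW_eq
    rw [this]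
    exact (hsm_meas.pow_const _).mul ((hφ.1.comp hsm_meas).pow_const 2)
  -- Cauchy–Schwarz setup
  set a : E → ℝ := fun ξ => Real.sqrt (A ξ) with ha_def
  set b : E → ℝ := fun ξ => Real.sqrt (hWeight s φ ξ * ‖g ξ‖ ^ 2) with hb_def
  have han : ∀ ξ, 0 ≤ a ξ := fun ξ => Real.sqrt_nonneg _
  have hbn : ∀ ξ, 0 ≤ b ξ := fun ξ => Real.sqrt_nonneg _
  have ham : AEStronglyMeasurable a volume :=
    (Real.continuous_sqrt.measurable.comp hA_meas).aestronglyMeasurable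
  have hgn2 : AEStronglyMeasurable (fun ξ : E => ‖g ξ‖ ^ 2) volume := by
    exact hg.1.norm.pow 2
  have hbm : AEStronglyMeasurable b volume :=
    Real.continuous_sqrt.comp_aestronglyMeasurable
      (hW_meas.aestronglyMeasurable.mul hgn2)
  have ha_sq : (fun ξ : E => a ξ ^ 2) = A := by
    funext ξ; exact Real.sq_sqrt (hA_nn ξ)
  have hb_sq : (fun ξ : E => b ξ ^ 2) = fun ξ => hWeight s φ ξ * ‖g ξ‖ ^ 2 := by
    funext ξ; exact Real.sq_sqrt (mul_nonneg (hW_nn ξ) (sq_nonneg _))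
  have ha2 : Integrable (fun ξ : E => a ξ ^ 2) volume := by rw [ha_sq]; exact hA_int
  have hb2 : Integrable (fun ξ : E => b ξ ^ 2) volume := by rw [hb_sq]; exact hg.2
  obtain ⟨hab_int, hab_le⟩ := cs_int han hbn ham hbm ha2 hb2
  have hab_bound : ∫ ξ, a ξ * b ξ ≤ Real.sqrt K * Real.sqrt Q := by
    have e1 : ∫ ξ, a ξ ^ 2 = K := by rw [ha_sq]
    have e2 : ∫ ξ, b ξ ^ 2 = Q := by rw [hb_sq]; rfl
    rwa [e1, e2] at hab_le
  -- pointwise bound `‖ξ‖^i ‖g ξ‖ ≤ a ξ * b ξ` for `i ≤ l`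
  have hAW : ∀ ξ : E, a ξ * b ξ = smod ξ ^ l * ‖g ξ‖ := by
    intro ξ
    have hAWprod : A ξ * hWeight s φ ξ = smod ξ ^ (2*l) := by
      rw [hW_eq ξ, hA_def, show 2*l+n = 2*l + n from rfl, pow_add]
      have h1 : smod ξ ≠ 0 := (hsm0 ξ).ne'
      have h2 : φ (smod ξ) ≠ 0 := (hφpos ξ).ne'
      field_simp
    rw [ha_def, hb_def, ← Real.sqrt_mul (hA_nn ξ), ← mul_assoc, hAWprod,
      show 2*l = l*2 from mul_comm 2 l, pow_mul,
      Real.sqrt_mul (sq_nonneg _), Real.sqrt_sq (pow_nonneg (hsm0 ξ).le l),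
      Real.sqrt_sq (norm_nonneg _)]
  have hnorm_le : ∀ ξ : E, ‖ξ‖ ≤ smod ξ := by
    intro ξ
    rw [smod]
    have h := Real.sq_sqrt (show (0:ℝ) ≤ 1 + ‖ξ‖^2 by positivity)
    nlinarith [Real.sqrt_nonneg (1 + ‖ξ‖^2), norm_nonneg ξ]
  have hpt : ∀ i : ℕ, i ≤ l → ∀ ξ : E, ‖ξ‖ ^ i * ‖g ξ‖ ≤ a ξ * b ξ := by
    intro i hi ξ
    rw [hAW ξ]
    have h1 : ‖ξ‖ ^ i ≤ smod ξ ^ i := pow_le_pow_left₀ (norm_nonneg ξ) (hnorm_le ξ) i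
    have h2 : smod ξ ^ i ≤ smod ξ ^ l := pow_le_pow_right₀ (hsm1 ξ) hi
    exact mul_le_mul_of_nonneg_right (le_trans h1 h2) (norm_nonneg _)
  have hInt : ∀ i : ℕ, i ≤ l → Integrable (fun v : E => ‖v‖ ^ i * ‖g v‖) volume := by
    intro i hi
    refine hab_int.mono' ((measurable_norm.pow_const i).aestronglyMeasurable.mul hg.1.norm) ?_
    refine ae_of_all _ fun v => ?_
    rw [Real.norm_of_nonneg (by positivity)]
    exact hpt i hi v
  have hIbound : ∀ i : ℕ, i ≤ l →
      ∫ v : E, ‖v‖ ^ i * ‖g v‖ ≤ Real.sqrt K * Real.sqrt Q := by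
    intro i hi
    refine le_trans (integral_mono_of_nonneg (ae_of_all _ fun v => by positivity)
      hab_int (ae_of_all _ (hpt i hi))) hab_bound
  have hf_hyp : ∀ i : ℕ, (i : ℕ∞) ≤ (l : ℕ∞) →
      Integrable (fun v : E => ‖v‖ ^ i * ‖g v‖) volume :=
    fun i hi => hInt i (by exact_mod_cast hi)
  -- the smooth representative
  refine ⟨fun x => 𝓕 g (-x), ?_, ?_, ?_⟩
  · exact (Real.contDiff_fourier (N := (l : ℕ∞)) hf_hyp).comp contDiff_neg
  · refine Filter.Eventually.of_forall fun x => ?_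
    exact (Real.fourierInv_eq_fourier_neg g x).symm
  · intro i hi x
    have hcomp : (fun x : E => 𝓕 g (-x))
        = (𝓕 g) ∘ ⇑(LinearIsometryEquiv.neg ℝ (E := E)) := by
      funext y; simp
    have h1 : ‖iteratedFDeriv ℝ i (fun x : E => 𝓕 g (-x)) x‖
        = ‖iteratedFDeriv ℝ i (𝓕 g) (-x)‖ := by
      rw [hcomp, LinearIsometryEquiv.norm_iteratedFDeriv_comp_right]
      simp
    rw [h1]
    have h2 := Real.iteratedFDeriv_fourier (N := (l : ℕ∞)) hf_hyp hg.1
      (n := i) (by exact_mod_cast hi)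
    rw [h2]
    have h3 : ‖𝓕
        (fun v => VectorFourier.fourierPowSMulRight (innerSL ℝ) g v i) (-x)‖
        ≤ ∫ v : E, ‖VectorFourier.fourierPowSMulRight (innerSL ℝ) g v i‖ :=
      VectorFourier.norm_fourierIntegral_le_integral_norm _ _ _ _ _
    have h4 : ∫ v : E, ‖VectorFourier.fourierPowSMulRight (innerSL ℝ) g v i‖
        ≤ (2 * Real.pi) ^ i * ∫ v : E, ‖v‖ ^ i * ‖g v‖ := by
      rw [← integral_const_mul]
      refine integral_mono_of_nonneg (ae_of_all _ fun v => norm_nonneg _)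
        ((hInt i hi).const_mul _) (ae_of_all _ fun v => ?_)
      have h5 := VectorFourier.norm_fourierPowSMulRight_le (innerSL ℝ) g v i
      have h6 : (2 * Real.pi * ‖innerSL ℝ (E := E)‖) ^ i ≤ (2 * Real.pi) ^ i := by
        apply pow_le_pow_left₀ (by positivity)
        have := norm_innerSL_le ℝ (E := E)
        nlinarith
      calc ‖VectorFourier.fourierPowSMulRight (innerSL ℝ) g v i‖
          ≤ (2 * Real.pi * ‖innerSL ℝ (E := E)‖) ^ i * ‖v‖ ^ i * ‖g v‖ := h5
        _ ≤ (2 * Real.pi) ^ i * ‖v‖ ^ i * ‖g v‖ := by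
            apply mul_le_mul_of_nonneg_right _ (norm_nonneg _)
            exact mul_le_mul_of_nonneg_right h6 (by positivity)
        _ = (2 * Real.pi) ^ i * (‖v‖ ^ i * ‖g v‖) := by ring
    have h7 : (2 * Real.pi) ^ i * ∫ v : E, ‖v‖ ^ i * ‖g v‖
        ≤ (2 * Real.pi) ^ i * (Real.sqrt K * Real.sqrt Q) :=
      mul_le_mul_of_nonneg_left (hIbound i hi) (by positivity)
    have h8 : (2 * Real.pi) ^ i * (Real.sqrt K * Real.sqrt Q) ≤ C * Real.sqrt Q := by
      have hbase : (2 * Real.pi) ^ i ≤ (2 * Real.pi + 1) ^ l :=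
        le_trans (pow_le_pow_left₀ (by positivity) (by linarith) i)
          (pow_le_pow_right₀ (by linarith) hi)
      have hK' : Real.sqrt K ≤ Real.sqrt K + 1 := by linarith
      have : (2 * Real.pi) ^ i * Real.sqrt K ≤ C := by
        rw [hC_def]
        exact mul_le_mul hbase hK' (Real.sqrt_nonneg _) (by positivity)
      calc (2 * Real.pi) ^ i * (Real.sqrt K * Real.sqrt Q)
          = ((2 * Real.pi) ^ i * Real.sqrt K) * Real.sqrt Q := by ring
        _ ≤ C * Real.sqrt Q := mul_le_mul_of_nonneg_right this (Real.sqrt_nonneg _)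
    exact le_trans h3 (le_trans h4 (le_trans h7 h8))
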